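/- arXiv:2010.15376 — 2 statements merged into one kernel-verified Lean document; each statement's English description precedes it below -/
import Mathlib

section
/- One-step contraction of the learned projected gradient descent (key inequality in the proof of Theorem 2). Let f : ℝ^m → ℝ, x ∈ ℝ^m, K = {z ∈ ℝ^m : f(z) ≤ f(x)} closed, D = {z − x : z ∈ K}, and C the closure of the conic hull {c·d : c ≥ 0, d ∈ D}. Let A ∈ ℝ^{n×m}, B ∈ ℝ^{m×n}, ω ∈ ℝ^n nonzero, y = Ax + ω, κ = 1 if f is convex and κ = 2 otherwise, ρ(B) = sup{ ⟨u, (I − BA)v⟩ : u, v ∈ C, ‖u‖₂ ≤ 1, ‖v‖₂ ≤ 1 }, and ξ(B) = sup{ ⟨u, Bω⟩ : u ∈ C, ‖u‖₂ ≤ 1 } / ‖ω‖₂. If x_t ∈ K and x_{t+1} is a nearest point in K to (I − BA)x_t + By, then ‖x_{t+1} − x‖₂ ≤ κ ρ(B) ‖x_t − x‖₂ + κ ξ(B) ‖ω‖₂. -/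
open scoped RealInnerProductSpace

set_option maxHeartbeats 1000000 in
open Classical in
/-- One-step contraction of the learned projected gradient descent
(key inequality in the proof of Theorem 2). -/
theorem learned_PGD_one_step_contraction (m n : ℕ)
    (f : EuclideanSpace ℝ (Fin m) → ℝ) (x : EuclideanSpace ℝ (Fin m))
    (K : Set (EuclideanSpace ℝ (Fin m))) (hK : K = {z | f z ≤ f x})
    (hKclosed : IsClosed K)
    (D : Set (EuclideanSpace ℝ (Fin m))) (hD : D = {d | ∃ z ∈ K, d = z - x})
    (C : Set (EuclideanSpace ℝ (Fin m)))
    (hC : C = closure {w | ∃ c : ℝ, 0 ≤ c ∧ ∃ d ∈ D, w = c • d})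
    (A : Matrix (Fin n) (Fin m) ℝ) (B : Matrix (Fin m) (Fin n) ℝ)
    (ω : EuclideanSpace ℝ (Fin n)) (hω : ω ≠ 0)
    (y : EuclideanSpace ℝ (Fin n))
    (hy : y = Matrix.toEuclideanLin A x + ω)
    (κ : ℝ) (hκ : κ = if ConvexOn ℝ Set.univ f then 1 else 2)
    (ρ ξ : ℝ)
    (hρ : ρ = sSup {r : ℝ | ∃ u ∈ C, ∃ v ∈ C, ‖u‖ ≤ 1 ∧ ‖v‖ ≤ 1 ∧
        r = ⟪u, v - Matrix.toEuclideanLin B (Matrix.toEuclideanLin A v)⟫})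
    (hξ : ξ = sSup {r : ℝ | ∃ u ∈ C, ‖u‖ ≤ 1 ∧
        r = ⟪u, Matrix.toEuclideanLin B ω⟫} / ‖ω‖)
    (xt xt1 : EuclideanSpace ℝ (Fin m)) (hxt : xt ∈ K)
    (hxt1 : xt1 ∈ K ∧ ∀ z ∈ K,
        ‖(xt - Matrix.toEuclideanLin B (Matrix.toEuclideanLin A xt)
            + Matrix.toEuclideanLin B y) - xt1‖ ≤
        ‖(xt - Matrix.toEuclideanLin B (Matrix.toEuclideanLin A xt)
            + Matrix.toEuclideanLin B y) - z‖) :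
    ‖xt1 - x‖ ≤ κ * ρ * ‖xt - x‖ + κ * ξ * ‖ω‖ := by
  set LA := Matrix.toEuclideanLin A with hLA
  set LB := Matrix.toEuclideanLin B with hLB
  set g := xt - LB (LA xt) + LB y with hg
  set e := xt - x with he
  set e' := xt1 - x with he'
  have hxK : x ∈ K := by rw [hK]; simp
  -- membership in C of scaled differences
  have hmemC : ∀ (c : ℝ), 0 ≤ c → ∀ z ∈ K, c • (z - x) ∈ C := by
    intro c hc z hz
    rw [hC]
    exact subset_closure ⟨c, hc, z - x, by rw [hD]; exact ⟨z, hz, rfl⟩, rfl⟩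
  have h0C : (0 : EuclideanSpace ℝ (Fin m)) ∈ C := by
    simpa using hmemC 0 le_rfl x hxK
  -- the two sup sets
  set S₁ : Set ℝ := {r : ℝ | ∃ u ∈ C, ∃ v ∈ C, ‖u‖ ≤ 1 ∧ ‖v‖ ≤ 1 ∧
      r = ⟪u, v - LB (LA v)⟫} with hS₁
  set S₂ : Set ℝ := {r : ℝ | ∃ u ∈ C, ‖u‖ ≤ 1 ∧ r = ⟪u, LB ω⟫} with hS₂
  -- boundedness
  set N : EuclideanSpace ℝ (Fin m) →L[ℝ] EuclideanSpace ℝ (Fin m) :=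
    LinearMap.toContinuousLinearMap (LinearMap.id - LB.comp LA) with hN
  have hNapp : ∀ v, v - LB (LA v) = N v := by
    intro v; simp [hN]
  have hbdd₁ : BddAbove S₁ := by
    refine ⟨‖N‖, ?_⟩
    rintro r ⟨u, -, v, -, hu1, hv1, rfl⟩
    calc ⟪u, v - LB (LA v)⟫ ≤ ‖u‖ * ‖v - LB (LA v)‖ := real_inner_le_norm _ _
      _ ≤ 1 * (‖N‖ * ‖v‖) := by
          rw [hNapp]
          exact mul_le_mul hu1 (N.le_opNorm v) (norm_nonneg _)
            (by norm_num)
      _ ≤ 1 * (‖N‖ * 1) := by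
          have h := mul_le_mul_of_nonneg_left hv1 N.opNorm_nonneg
          linarith
      _ = ‖N‖ := by ring
  have hbdd₂ : BddAbove S₂ := by
    refine ⟨‖LB ω‖, ?_⟩
    rintro r ⟨u, -, hu1, rfl⟩
    calc ⟪u, LB ω⟫ ≤ ‖u‖ * ‖LB ω‖ := real_inner_le_norm _ _
      _ ≤ 1 * ‖LB ω‖ := mul_le_mul_of_nonneg_right hu1 (norm_nonneg _)
      _ = ‖LB ω‖ := one_mul _
  have h0S₁ : (0 : ℝ) ∈ S₁ := ⟨0, h0C, 0, h0C, by simp, by simp, by simp⟩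
  have h0S₂ : (0 : ℝ) ∈ S₂ := ⟨0, h0C, by simp, by simp⟩
  have hρ0 : 0 ≤ ρ := hρ ▸ le_csSup hbdd₁ h0S₁
  have hsS₂0 : 0 ≤ sSup S₂ := le_csSup hbdd₂ h0S₂
  have hωpos : (0 : ℝ) < ‖ω‖ := norm_pos_iff.mpr hω
  have hξω : ξ * ‖ω‖ = sSup S₂ := by
    rw [hξ]; exact div_mul_cancel₀ _ (ne_of_gt hωpos)
  have hξ0 : 0 ≤ ξ := by rw [hξ]; exact div_nonneg hsS₂0 (le_of_lt hωpos)
  have hκ1 : 1 ≤ κ := by rw [hκ]; split <;> norm_num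
  have hκ0 : 0 ≤ κ := le_trans zero_le_one hκ1
  -- key bound A
  have hA : ⟪e', e - LB (LA e)⟫ ≤ ρ * (‖e'‖ * ‖e‖) := by
    rcases eq_or_ne e' 0 with h1 | h1
    · simp [h1, hρ0]
    rcases eq_or_ne e 0 with h2 | h2
    · simp [h2]
    have hne' : (0:ℝ) < ‖e'‖ := norm_pos_iff.mpr h1
    have hne : (0:ℝ) < ‖e‖ := norm_pos_iff.mpr h2
    have huC : ‖e'‖⁻¹ • e' ∈ C := hmemC _ (inv_nonneg.mpr hne'.le) xt1 hxt1.1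
    have hvC : ‖e‖⁻¹ • e ∈ C := hmemC _ (inv_nonneg.mpr hne.le) xt hxt
    have hun : ‖‖e'‖⁻¹ • e'‖ = 1 := by
      rw [norm_smul]; simp [abs_of_nonneg (inv_nonneg.mpr hne'.le),
        inv_mul_cancel₀ (ne_of_gt hne')]
    have hvn : ‖‖e‖⁻¹ • e‖ = 1 := by
      rw [norm_smul]; simp [abs_of_nonneg (inv_nonneg.mpr hne.le),
        inv_mul_cancel₀ (ne_of_gt hne)]
    have hmem : ⟪‖e'‖⁻¹ • e', ‖e‖⁻¹ • e - LB (LA (‖e‖⁻¹ • e))⟫ ∈ S₁ :=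
      ⟨_, huC, _, hvC, hun.le, hvn.le, rfl⟩
    have hle : ⟪‖e'‖⁻¹ • e', ‖e‖⁻¹ • e - LB (LA (‖e‖⁻¹ • e))⟫ ≤ ρ :=
      hρ ▸ le_csSup hbdd₁ hmem
    have hcalc : ⟪‖e'‖⁻¹ • e', ‖e‖⁻¹ • e - LB (LA (‖e‖⁻¹ • e))⟫
        = ‖e'‖⁻¹ * (‖e‖⁻¹ * ⟪e', e - LB (LA e)⟫) := by
      rw [map_smul, map_smul, ← smul_sub, real_inner_smul_left,
        real_inner_smul_right]
    rw [hcalc] at hle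
    have := mul_le_mul_of_nonneg_left hle (le_of_lt (mul_pos hne' hne))
    calc ⟪e', e - LB (LA e)⟫
        = (‖e'‖ * ‖e‖) * (‖e'‖⁻¹ * (‖e‖⁻¹ * ⟪e', e - LB (LA e)⟫)) := by
          field_simp
      _ ≤ (‖e'‖ * ‖e‖) * ρ := this
      _ = ρ * (‖e'‖ * ‖e‖) := by ring
  -- key bound B
  have hB : ⟪e', LB ω⟫ ≤ (ξ * ‖ω‖) * ‖e'‖ := by
    rcases eq_or_ne e' 0 with h1 | h1
    · simp [h1]
    have hne' : (0:ℝ) < ‖e'‖ := norm_pos_iff.mpr h1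
    have huC : ‖e'‖⁻¹ • e' ∈ C := hmemC _ (inv_nonneg.mpr hne'.le) xt1 hxt1.1
    have hun : ‖‖e'‖⁻¹ • e'‖ = 1 := by
      rw [norm_smul]; simp [abs_of_nonneg (inv_nonneg.mpr hne'.le),
        inv_mul_cancel₀ (ne_of_gt hne')]
    have hmem : ⟪‖e'‖⁻¹ • e', LB ω⟫ ∈ S₂ := ⟨_, huC, hun.le, rfl⟩
    have hle : ⟪‖e'‖⁻¹ • e', LB ω⟫ ≤ sSup S₂ := le_csSup hbdd₂ hmem
    rw [real_inner_smul_left] at hle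
    rw [hξω]
    have := mul_le_mul_of_nonneg_left hle hne'.le
    calc ⟪e', LB ω⟫ = ‖e'‖ * (‖e'‖⁻¹ * ⟪e', LB ω⟫) := by field_simp
      _ ≤ ‖e'‖ * sSup S₂ := this
      _ = sSup S₂ * ‖e'‖ := by ring
  -- decomposition of g - x
  have hgx : g - x = (e - LB (LA e)) + LB ω := by
    rw [hg, hy, he]
    simp only [map_add, map_sub]
    abel
  -- the squared-norm inequality
  have hsq : ‖e'‖ ^ 2 ≤ κ * ⟪e', g - x⟫ := by
    by_cases hconv : ConvexOn ℝ Set.univ f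
    · have hκ' : κ = 1 := by rw [hκ, if_pos hconv]
      have hKconv : Convex ℝ K := by
        rw [hK]
        simpa using hconv.convex_le (f x)
      -- projection inequality
      have hproj : ⟪g - xt1, x - xt1⟫ ≤ 0 := by
        by_contra hcon
        push_neg at hcon
        set q := x - xt1 with hq
        set a := ⟪g - xt1, q⟫ with ha
        have hq0 : q ≠ 0 := by
          intro h
          rw [h] at ha
          simp [ha] at hcon
        have hqpos : (0:ℝ) < ‖q‖ ^ 2 := by
          have := norm_pos_iff.mpr hq0
          positivity
        set t : ℝ := min 1 (a / ‖q‖ ^ 2) with ht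
        have ht0 : 0 < t := lt_min one_pos (div_pos hcon hqpos)
        have ht1 : t ≤ 1 := min_le_left _ _
        have htq : t * ‖q‖ ^ 2 ≤ a := by
          have : t ≤ a / ‖q‖ ^ 2 := min_le_right _ _
          calc t * ‖q‖ ^ 2 ≤ (a / ‖q‖ ^ 2) * ‖q‖ ^ 2 :=
                mul_le_mul_of_nonneg_right this hqpos.le
            _ = a := div_mul_cancel₀ _ (ne_of_gt hqpos)
        have hzK : xt1 + t • q ∈ K := by
          have := hKconv hxt1.1 hxK (by linarith : (0:ℝ) ≤ 1 - t) ht0.le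
            (by ring)
          convert this using 1
          rw [hq]
          module
        have hdist := hxt1.2 _ hzK
        have hdist2 : ‖g - xt1‖ ^ 2 ≤ ‖g - (xt1 + t • q)‖ ^ 2 := by
          have h0 : (0:ℝ) ≤ ‖g - xt1‖ := norm_nonneg _
          nlinarith [hdist]
        have hexp : ‖g - (xt1 + t • q)‖ ^ 2
            = ‖g - xt1‖ ^ 2 - 2 * (t * a) + t ^ 2 * ‖q‖ ^ 2 := by
          have h1 : g - (xt1 + t • q) = (g - xt1) - t • q := by abel
          rw [h1, norm_sub_sq_real, real_inner_smul_right, norm_smul,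
            mul_pow, Real.norm_eq_abs, sq_abs, ← ha]
          try ring
        rw [hexp] at hdist2
        have h2ta : 2 * (t * a) ≤ t ^ 2 * ‖q‖ ^ 2 := by linarith
        have : 2 * a ≤ t * ‖q‖ ^ 2 := by
          have := (mul_le_mul_iff_right₀ ht0).mp (by nlinarith : t * (2 * a) ≤ t * (t * ‖q‖ ^ 2))
          linarith
        linarith
      have hdecomp : ⟪e', g - x⟫ = ⟪e', g - xt1⟫ + ‖e'‖ ^ 2 := by
        have h1 : g - x = (g - xt1) + e' := by rw [he']; abel
        rw [h1, inner_add_right, real_inner_self_eq_norm_sq]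
      have hpos : 0 ≤ ⟪e', g - xt1⟫ := by
        have : ⟪e', g - xt1⟫ = -⟪g - xt1, x - xt1⟫ := by
          rw [real_inner_comm]
          have : e' = -(x - xt1) := by rw [he']; abel
          rw [this, inner_neg_right]
        linarith [this ▸ neg_nonneg.mpr hproj]
      rw [hκ', one_mul, hdecomp]
      linarith
    · have hκ' : κ = 2 := by rw [hκ, if_neg hconv]
      have hdist := hxt1.2 x hxK
      have hdist2 : ‖g - xt1‖ ^ 2 ≤ ‖g - x‖ ^ 2 := by
        have h0 : (0:ℝ) ≤ ‖g - xt1‖ := norm_nonneg _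
        nlinarith [hdist]
      have hexp : ‖g - xt1‖ ^ 2
          = ‖g - x‖ ^ 2 - 2 * ⟪g - x, e'⟫ + ‖e'‖ ^ 2 := by
        have h1 : g - xt1 = (g - x) - e' := by rw [he']; abel
        rw [h1, norm_sub_sq_real]
      rw [hexp] at hdist2
      rw [hκ', real_inner_comm]
      linarith
  -- combine
  have hinner : ⟪e', g - x⟫ ≤ ρ * (‖e'‖ * ‖e‖) + (ξ * ‖ω‖) * ‖e'‖ := by
    rw [hgx, inner_add_right]
    exact add_le_add hA hB
  have hfinal : ‖e'‖ ^ 2 ≤ κ * (ρ * (‖e'‖ * ‖e‖) + (ξ * ‖ω‖) * ‖e'‖) := by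
    calc ‖e'‖ ^ 2 ≤ κ * ⟪e', g - x⟫ := hsq
      _ ≤ _ := mul_le_mul_of_nonneg_left hinner hκ0
  rcases eq_or_lt_of_le (norm_nonneg e') with h1 | h1
  · rw [← h1]
    have : 0 ≤ κ * ρ * ‖e‖ := by positivity
    have : 0 ≤ κ * ξ * ‖ω‖ := by positivity
    linarith
  · have : ‖e'‖ * ‖e'‖ ≤ ‖e'‖ * (κ * ρ * ‖e‖ + κ * ξ * ‖ω‖) := by
      nlinarith [hfinal]
    exact le_of_mul_le_mul_left this h1
end

section
/- Projection comparison between a set and its conic hull (the lemma invoked in the proof of Theorem 2). Let D ⊆ ℝ^m be nonempty with 0 ∈ D, and let C be the closure of the conic hull {c·d : c ≥ 0, d ∈ D}. Let v ∈ ℝ^m, let p_D be a nearest point in D to v, and let p_C be a nearest point in C to v. Then ‖p_D‖₂ ≤ 2‖p_C‖₂. Moreover, if D is closed and convex, then ‖p_D‖₂ ≤ ‖p_C‖₂. -/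
open scoped RealInnerProductSpace

/-- Projection comparison between a set `D` (with `0 ∈ D`) and the closure `C` of its conic
hull: the nearest point of `D` satisfies `‖p_D‖ ≤ 2 ‖p_C‖`, and `‖p_D‖ ≤ ‖p_C‖` when `D` is
closed and convex. -/
theorem norm_proj_set_le_norm_proj_cone (m : ℕ)
    (D : Set (EuclideanSpace ℝ (Fin m))) (hDne : D.Nonempty) (hD0 : (0 : EuclideanSpace ℝ (Fin m)) ∈ D)
    (C : Set (EuclideanSpace ℝ (Fin m)))
    (hC : C = closure {w | ∃ c : ℝ, 0 ≤ c ∧ ∃ d ∈ D, w = c • d})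
    (v : EuclideanSpace ℝ (Fin m))
    (pD : EuclideanSpace ℝ (Fin m)) (hpD : pD ∈ D ∧ ∀ z ∈ D, ‖v - pD‖ ≤ ‖v - z‖)
    (pC : EuclideanSpace ℝ (Fin m)) (hpC : pC ∈ C ∧ ∀ z ∈ C, ‖v - pC‖ ≤ ‖v - z‖) :
    ‖pD‖ ≤ 2 * ‖pC‖ ∧ (IsClosed D → Convex ℝ D → ‖pD‖ ≤ ‖pC‖) := by
  obtain ⟨hpDmem, hpDmin⟩ := hpD
  obtain ⟨hpCmem, hpCmin⟩ := hpC
  have hDS : D ⊆ C := by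
    intro d hd
    rw [hC]
    exact subset_closure ⟨1, zero_le_one, d, hd, (one_smul ℝ d).symm⟩
  have hcone : ∀ t : ℝ, 0 ≤ t → ∀ x ∈ C, t • x ∈ C := by
    intro t ht x hx
    rw [hC] at hx ⊢
    refine map_mem_closure (continuous_const_smul t) hx ?_
    rintro w ⟨c, hc, d, hd, rfl⟩
    exact ⟨t * c, mul_nonneg ht hc, d, hd, (mul_smul t c d).symm⟩
  -- expansion helper
  have expand : ∀ (t : ℝ) (x : EuclideanSpace ℝ (Fin m)),
      ‖v - t • x‖ ^ 2 = ‖v‖ ^ 2 - 2 * t * ⟪v, x⟫ + t ^ 2 * ‖x‖ ^ 2 := by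
    intro t x
    rw [norm_sub_sq_real, real_inner_smul_right, norm_smul]
    rw [mul_pow]
    simp [Real.norm_eq_abs, sq_abs]
    ring
  have sqleC : ∀ z ∈ C, ‖v - pC‖ ^ 2 ≤ ‖v - z‖ ^ 2 := fun z hz =>
    pow_le_pow_left₀ (norm_nonneg _) (hpCmin z hz) 2
  have sqleD : ∀ z ∈ D, ‖v - pD‖ ^ 2 ≤ ‖v - z‖ ^ 2 := fun z hz =>
    pow_le_pow_left₀ (norm_nonneg _) (hpDmin z hz) 2
  -- key1 : ‖pD‖² ≤ 2 ⟪v, pD⟫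
  have key1 : ‖pD‖ ^ 2 ≤ 2 * ⟪v, pD⟫ := by
    have h := sqleD 0 hD0
    have e1 : ‖v - pD‖ ^ 2 = ‖v‖ ^ 2 - 2 * 1 * ⟪v, pD⟫ + 1 ^ 2 * ‖pD‖ ^ 2 := by
      rw [← expand 1 pD, one_smul]
    simp only [sub_zero] at h
    nlinarith [h, e1]
  -- orthogonality : ⟪v, pC⟫ = ‖pC‖²
  have horth : ⟪v, pC⟫ = ‖pC‖ ^ 2 := by
    have epc : ‖v - pC‖ ^ 2 = ‖v‖ ^ 2 - 2 * ⟪v, pC⟫ + ‖pC‖ ^ 2 := by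
      have := expand 1 pC
      rw [one_smul] at this
      linarith [this]
    rcases eq_or_ne pC 0 with h0 | h0
    · simp [h0]
    have hn : (0:ℝ) < ‖pC‖ ^ 2 := pow_pos (norm_pos_iff.mpr h0) 2
    -- from t = 0 : ⟪v,pC⟫ ≥ ‖pC‖²/2 > 0
    have h0' : ‖v - pC‖ ^ 2 ≤ ‖v‖ ^ 2 := by
      have := sqleC ((0:ℝ) • pC) (hcone 0 le_rfl pC hpCmem)
      rw [expand 0 pC] at this
      nlinarith [this]
    have ha : (0:ℝ) ≤ ⟪v, pC⟫ := by nlinarith [epc, h0', hn]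
    set a := ⟪v, pC⟫ with hadef
    set n := ‖pC‖ ^ 2 with hndef
    have ht : a / n ≥ 0 := div_nonneg ha hn.le
    have h2 := sqleC ((a / n) • pC) (hcone (a / n) ht pC hpCmem)
    rw [expand (a / n) pC] at h2
    have hann : (a / n) * n = a := div_mul_cancel₀ a hn.ne'
    have : ‖v‖ ^ 2 - 2 * a + n ≤ ‖v‖ ^ 2 - 2 * (a / n) * a + (a / n) ^ 2 * n := by
      calc ‖v‖ ^ 2 - 2 * a + n = ‖v - pC‖ ^ 2 := by rw [epc]
        _ ≤ _ := h2
    have hsq : (a - n) ^ 2 ≤ 0 := by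
      have h4 : 2 * (a / n) * a = 2 * (a ^ 2 / n) := by field_simp
      have h3 : (a / n) ^ 2 * n = a ^ 2 / n := by field_simp
      rw [h4, h3] at this
      have h5 : n - 2 * a + a ^ 2 / n ≤ 0 := by linarith
      have h6 : (n - 2 * a + a ^ 2 / n) * n = (a - n) ^ 2 := by field_simp; ring
      have h7 := mul_le_mul_of_nonneg_right h5 hn.le
      rw [h6] at h7
      linarith [h7]
    have := sq_nonneg (a - n)
    nlinarith [hsq, this]
  -- key2 : ⟪v, pD⟫ ≤ ‖pC‖ * ‖pD‖
  have key2 : ⟪v, pD⟫ ≤ ‖pC‖ * ‖pD‖ := by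
    rcases le_or_gt ⟪v, pD⟫ 0 with hle | hgt
    · exact hle.trans (by positivity)
    have hpD0 : pD ≠ 0 := by
      rintro rfl
      simp [inner_zero_right] at hgt
    have hn' : (0:ℝ) < ‖pD‖ ^ 2 := pow_pos (norm_pos_iff.mpr hpD0) 2
    set a := ⟪v, pD⟫ with hadef
    set n := ‖pD‖ ^ 2 with hndef
    have ht : (0:ℝ) ≤ a / n := le_of_lt (div_pos hgt hn')
    have h2 := sqleC ((a / n) • pD) (hcone (a / n) ht pD (hDS hpDmem))
    rw [expand (a / n) pD] at h2
    have epc : ‖v - pC‖ ^ 2 = ‖v‖ ^ 2 - ‖pC‖ ^ 2 := by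
      have := expand 1 pC
      rw [one_smul] at this
      rw [this, horth]; ring
    have h3 : (a / n) ^ 2 * n = a ^ 2 / n := by field_simp
    have h4 : 2 * (a / n) * a = 2 * (a ^ 2 / n) := by field_simp
    rw [h3, h4, epc] at h2
    have h5 : a ^ 2 / n ≤ ‖pC‖ ^ 2 := by linarith
    have h6 : a ^ 2 ≤ ‖pC‖ ^ 2 * n := by
      rw [div_le_iff₀ hn'] at h5
      linarith
    nlinarith [h6, hgt, mul_nonneg (norm_nonneg pC) (norm_nonneg pD), hn']
  constructor
  · -- ‖pD‖² ≤ 2⟪v,pD⟫ ≤ 2‖pC‖‖pD‖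
    rcases eq_or_lt_of_le (norm_nonneg pD) with h0 | h0
    · rw [← h0]; positivity
    have : ‖pD‖ ^ 2 ≤ 2 * (‖pC‖ * ‖pD‖) := by linarith [key1, key2]
    nlinarith [this, h0]
  · intro _ hconv
    rcases eq_or_lt_of_le (norm_nonneg pD) with h0 | h0
    · rw [← h0]; exact norm_nonneg pC
    have hn' : (0:ℝ) < ‖pD‖ ^ 2 := by positivity
    -- key3 : ‖pD‖² ≤ ⟪v,pD⟫
    have key3 : ‖pD‖ ^ 2 ≤ ⟪v, pD⟫ := by
      by_contra hlt
      push_neg at hlt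
      set a := ⟪v, pD⟫ with hadef
      set n := ‖pD‖ ^ 2 with hndef
      have ha : 0 ≤ a := by nlinarith [key1, hn']
      set t := (n - a) / n with htdef
      have ht0 : 0 < t := div_pos (by linarith) hn'
      have ht1 : t ≤ 1 := by
        rw [div_le_one hn']; linarith
      have hmem : (1 - t) • pD ∈ D := by
        have := hconv hpDmem hD0 (by linarith : (0:ℝ) ≤ 1 - t) ht0.le (by ring)
        simpa using this
      have h2 := sqleD ((1 - t) • pD) hmem
      rw [expand (1 - t) pD] at h2
      have e1 : ‖v - pD‖ ^ 2 = ‖v‖ ^ 2 - 2 * a + n := by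
        have := expand 1 pD
        rw [one_smul] at this
        rw [this]; ring
      rw [e1] at h2
      -- h2 : ‖v‖² - 2a + n ≤ ‖v‖² - 2(1-t)a + (1-t)²n
      have h7 : t * (n * (2 - t)) ≤ t * (2 * a) := by nlinarith [h2]
      have h9 : n * (2 - t) ≤ 2 * a := (mul_le_mul_iff_right₀ ht0).mp h7
      have htn : t * n = n - a := by
        rw [htdef]; field_simp
      have h10 : n * (2 - t) = 2 * n - t * n := by ring
      rw [htn] at h10
      linarith [h9, h10, hlt]
    have : ‖pD‖ ^ 2 ≤ ‖pC‖ * ‖pD‖ := key3.trans key2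
    nlinarith [this, h0]
end
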